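/- The poset of subsets of {1,...,n}, ordered by I ≥ J iff |I| ≤ |J| and i_s ≥ j_s for all s ≤ |I|, is a distributive lattice with meet and join given by the explicit formulas I ∧ J = (min(i_1,j_1),...,min(i_k,j_k), j_{k+1},...,j_ℓ) and I ∨ J = (max(i_1,j_1),...,max(i_k,j_k)) for |I| = k ≤ ℓ = |J|. -/

import Mathlib

/-- The s-th smallest element (0-indexed) of a finite set of naturals. -/
def sortNth (I : Finset ℕ) (s : ℕ) : ℕ := (I.sort (· ≤ ·))[s]!

/-- The Gonciulea–Lakshmibai order: I ≥ J iff |I| ≤ |J| and the s-th smallest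
element of I is ≥ the s-th smallest element of J for all s < |I|. -/
def glGe (I J : Finset ℕ) : Prop :=
  I.card ≤ J.card ∧ ∀ s < I.card, sortNth J s ≤ sortNth I s

lemma sortNth_strict {I : Finset ℕ} {s t : ℕ} (hst : s < t) (ht : t < I.card) :
    sortNth I s < sortNth I t := by
  have hlen : (I.sort (· ≤ ·)).length = I.card := Finset.length_sort _
  have hs' : s < (I.sort (· ≤ ·)).length := by omega
  have ht' : t < (I.sort (· ≤ ·)).length := by omega
  have := (List.pairwise_iff_getElem.mp (Finset.sortedLT_sort I).pairwise) s t hs' ht' hst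
  unfold sortNth
  rw [getElem!_pos (I.sort (· ≤ ·)) s hs', getElem!_pos (I.sort (· ≤ ·)) t ht']
  exact this

lemma sort_image_of_strictMono {m : ℕ} {f : ℕ → ℕ}
    (hf : ∀ s t, s < t → t < m → f s < f t) :
    ((Finset.range m).image f).sort (· ≤ ·) = (List.range m).map f := by
  refine (fun hp h1 h2 => List.Perm.eq_of_pairwise' (r := (· ≤ ·)) h1 h2 hp) ?_ ?_ ?_
  · have hinj : Set.InjOn f (Finset.range m) := by
      intro a ha b hb hab
      simp only [Finset.coe_range, Set.mem_Iio] at ha hb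
      by_contra hne
      rcases lt_or_gt_of_ne hne with h | h
      · exact absurd hab (hf a b h hb).ne
      · exact absurd hab.symm (hf b a h ha).ne
    refine (Finset.sort_perm_toList _ _).trans ?_
    have hval : ((Finset.range m).image f).val = (Finset.range m).val.map f :=
      Finset.image_val_of_injOn hinj
    apply Multiset.coe_eq_coe.mp
    rw [Finset.coe_toList, hval]
    simp [Finset.range_val, Multiset.range]
  · exact Finset.pairwise_sort _ _
  · rw [List.pairwise_iff_getElem]
    intro i j hi hj hij
    simp only [List.length_map, List.length_range] at hi hj
    simp only [List.getElem_map, List.getElem_range]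
    exact (hf i j hij hj).le

lemma card_image_of_strictMono {m : ℕ} {f : ℕ → ℕ}
    (hf : ∀ s t, s < t → t < m → f s < f t) :
    ((Finset.range m).image f).card = m := by
  rw [← Finset.length_sort (· ≤ ·), sort_image_of_strictMono hf]
  simp

lemma sortNth_image_of_strictMono {m : ℕ} {f : ℕ → ℕ}
    (hf : ∀ s t, s < t → t < m → f s < f t) {s : ℕ} (hs : s < m) :
    sortNth ((Finset.range m).image f) s = f s := by
  unfold sortNth
  rw [sort_image_of_strictMono hf]
  have hlen : s < ((List.range m).map f).length := by simpa using hs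
  rw [getElem!_pos ((List.range m).map f) s hlen]
  simp

/-- The join I ∨ J = {max(i_1,j_1),…,max(i_k,j_k)} for |I| = k ≤ |J|. -/
def glJoinAux (I J : Finset ℕ) : Finset ℕ :=
  (Finset.range I.card).image (fun s => max (sortNth I s) (sortNth J s))

/-- The meet I ∧ J = {min(i_1,j_1),…,min(i_k,j_k), j_{k+1},…,j_ℓ}
for |I| = k ≤ ℓ = |J|. -/
def glMeetAux (I J : Finset ℕ) : Finset ℕ :=
  (Finset.range J.card).image
    (fun s => if s < I.card then min (sortNth I s) (sortNth J s) else sortNth J s)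

/-- Join, defined symmetrically. -/
def glJoin (I J : Finset ℕ) : Finset ℕ :=
  if I.card ≤ J.card then glJoinAux I J else glJoinAux J I

/-- Meet, defined symmetrically. -/
def glMeet (I J : Finset ℕ) : Finset ℕ :=
  if I.card ≤ J.card then glMeetAux I J else glMeetAux J I

lemma glJoinAux_mono {I J : Finset ℕ} (h : I.card ≤ J.card) :
    ∀ s t, s < t → t < I.card →
      (fun s => max (sortNth I s) (sortNth J s)) s < (fun s => max (sortNth I s) (sortNth J s)) t := by
  intro s t hst ht
  have h1 := sortNth_strict hst ht
  have h2 := sortNth_strict hst (lt_of_lt_of_le ht h)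
  simp only
  omega

lemma glMeetAux_mono {I J : Finset ℕ} (h : I.card ≤ J.card) :
    ∀ s t, s < t → t < J.card →
      (fun s => if s < I.card then min (sortNth I s) (sortNth J s) else sortNth J s) s <
      (fun s => if s < I.card then min (sortNth I s) (sortNth J s) else sortNth J s) t := by
  intro s t hst ht
  have h2 := sortNth_strict hst ht
  simp only
  by_cases ht' : t < I.card
  · have h1 := sortNth_strict hst ht'
    rw [if_pos (by omega), if_pos ht']
    omega
  · by_cases hs' : s < I.card
    · rw [if_pos hs', if_neg ht']; omega
    · rw [if_neg hs', if_neg ht']; omega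

lemma glJoinAux_card {I J : Finset ℕ} (h : I.card ≤ J.card) :
    (glJoinAux I J).card = I.card :=
  card_image_of_strictMono (glJoinAux_mono h)

lemma glJoinAux_nth {I J : Finset ℕ} (h : I.card ≤ J.card) {s : ℕ} (hs : s < I.card) :
    sortNth (glJoinAux I J) s = max (sortNth I s) (sortNth J s) :=
  sortNth_image_of_strictMono (glJoinAux_mono h) hs

lemma glMeetAux_card {I J : Finset ℕ} (h : I.card ≤ J.card) :
    (glMeetAux I J).card = J.card :=
  card_image_of_strictMono (glMeetAux_mono h)

lemma glMeetAux_nth {I J : Finset ℕ} (h : I.card ≤ J.card) {s : ℕ} (hs : s < J.card) :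
    sortNth (glMeetAux I J) s
      = if s < I.card then min (sortNth I s) (sortNth J s) else sortNth J s :=
  sortNth_image_of_strictMono (glMeetAux_mono h) hs

lemma glJoin_card (I J : Finset ℕ) : (glJoin I J).card = min I.card J.card := by
  unfold glJoin
  split_ifs with h
  · rw [glJoinAux_card h]; omega
  · rw [glJoinAux_card (by omega)]; omega

lemma glJoin_nth (I J : Finset ℕ) {s : ℕ} (hs : s < min I.card J.card) :
    sortNth (glJoin I J) s = max (sortNth I s) (sortNth J s) := by
  unfold glJoin
  split_ifs with h
  · rw [glJoinAux_nth h (by omega)]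
  · rw [glJoinAux_nth (by omega : J.card ≤ I.card) (by omega)]; omega

lemma glMeet_card (I J : Finset ℕ) : (glMeet I J).card = max I.card J.card := by
  unfold glMeet
  split_ifs with h
  · rw [glMeetAux_card h]; omega
  · rw [glMeetAux_card (by omega : J.card ≤ I.card)]; omega

lemma glMeet_nth (I J : Finset ℕ) {s : ℕ} (hs : s < max I.card J.card) :
    sortNth (glMeet I J) s =
      if s < I.card then
        (if s < J.card then min (sortNth I s) (sortNth J s) else sortNth I s)
      else sortNth J s := by
  unfold glMeet
  by_cases h : I.card ≤ J.card
  · rw [if_pos h, glMeetAux_nth h (by omega)]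
    split_ifs <;> omega
  · rw [if_neg h, glMeetAux_nth (by omega : J.card ≤ I.card) (by omega)]
    split_ifs <;> omega

lemma finset_eq_of_sortNth {A B : Finset ℕ} (hcard : A.card = B.card)
    (h : ∀ s < A.card, sortNth A s = sortNth B s) : A = B := by
  have hA : (A.sort (· ≤ ·)).length = A.card := Finset.length_sort _
  have hB : (B.sort (· ≤ ·)).length = B.card := Finset.length_sort _
  have hsort : A.sort (· ≤ ·) = B.sort (· ≤ ·) := by
    apply List.ext_getElem (by omega)
    intro i h1 h2
    have hi := h i (by omega)
    unfold sortNth at hi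
    rwa [getElem!_pos (A.sort (· ≤ ·)) i h1, getElem!_pos (B.sort (· ≤ ·)) i h2] at hi
  calc A = (A.sort (· ≤ ·)).toFinset := (Finset.sort_toFinset _ _).symm
    _ = (B.sort (· ≤ ·)).toFinset := by rw [hsort]
    _ = B := Finset.sort_toFinset _ _

/-- The Gonciulea–Lakshmibai poset of subsets of {1,…,n} is a distributive
lattice, with meet and join given by the explicit coordinatewise min/max
formulas: glJoin is the least upper bound, glMeet is the greatest lower
bound, and both distributive laws hold. -/
theorem stmt_6 (n : ℕ) :
    (∀ I J : Finset ℕ, I ⊆ Finset.Icc 1 n → J ⊆ Finset.Icc 1 n →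
      glGe (glJoin I J) I ∧ glGe (glJoin I J) J ∧
      (∀ U : Finset ℕ, U ⊆ Finset.Icc 1 n → glGe U I → glGe U J →
        glGe U (glJoin I J))) ∧
    (∀ I J : Finset ℕ, I ⊆ Finset.Icc 1 n → J ⊆ Finset.Icc 1 n →
      glGe I (glMeet I J) ∧ glGe J (glMeet I J) ∧
      (∀ L : Finset ℕ, L ⊆ Finset.Icc 1 n → glGe I L → glGe J L →
        glGe (glMeet I J) L)) ∧
    (∀ I J K : Finset ℕ, I ⊆ Finset.Icc 1 n → J ⊆ Finset.Icc 1 n →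
      K ⊆ Finset.Icc 1 n →
      glMeet I (glJoin J K) = glJoin (glMeet I J) (glMeet I K) ∧
      glJoin I (glMeet J K) = glMeet (glJoin I J) (glJoin I K)) := by
  refine ⟨?_, ?_, ?_⟩
  · -- join is lub
    intro I J _ _
    have hc := glJoin_card I J
    refine ⟨⟨by omega, ?_⟩, ⟨by omega, ?_⟩, ?_⟩
    · intro s hs
      rw [glJoin_nth I J (by omega)]; omega
    · intro s hs
      rw [glJoin_nth I J (by omega)]; omega
    · rintro U _ ⟨hUI, hUI2⟩ ⟨hUJ, hUJ2⟩
      refine ⟨by omega, ?_⟩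
      intro s hs
      rw [glJoin_nth I J (by omega)]
      have := hUI2 s hs
      have := hUJ2 s hs
      omega
  · -- meet is glb
    intro I J _ _
    have hc := glMeet_card I J
    refine ⟨⟨by omega, ?_⟩, ⟨by omega, ?_⟩, ?_⟩
    · intro s hs
      rw [glMeet_nth I J (by omega)]
      split_ifs <;> omega
    · intro s hs
      rw [glMeet_nth I J (by omega)]
      split_ifs <;> omega
    · rintro L _ ⟨hIL, hIL2⟩ ⟨hJL, hJL2⟩
      refine ⟨by omega, ?_⟩
      intro s hs
      rw [hc] at hs
      rw [glMeet_nth I J (by omega)]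
      by_cases h1 : s < I.card
      · have := hIL2 s h1
        by_cases h2 : s < J.card
        · have := hJL2 s h2
          simp only [if_pos h1, if_pos h2]; omega
        · simp only [if_pos h1, if_neg h2]; omega
      · have h2 : s < J.card := by omega
        have := hJL2 s h2
        simp only [if_neg h1]; omega
  · -- distributivity
    intro I J K _ _ _
    have cJK := glJoin_card J K
    have cIJ := glMeet_card I J
    have cIK := glMeet_card I K
    have cJK' := glMeet_card J K
    have cIJ' := glJoin_card I J
    have cIK' := glJoin_card I K
    constructor
    · apply finset_eq_of_sortNth
      · rw [glMeet_card, glJoin_card, glJoin_card, cIJ, cIK]; omega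
      · intro s hs
        rw [glMeet_card, cJK] at hs
        rw [glMeet_nth I (glJoin J K) (by omega), cJK,
          glJoin_nth (glMeet I J) (glMeet I K) (by rw [cIJ, cIK]; omega),
          glMeet_nth I J (by omega), glMeet_nth I K (by omega)]
        by_cases hbc : s < min J.card K.card
        · rw [glJoin_nth J K (by omega)]
          split_ifs <;> omega
        · rw [if_pos (show s < I.card by omega), if_neg hbc]
          split_ifs <;> omega
    · apply finset_eq_of_sortNth
      · rw [glJoin_card, glMeet_card, glMeet_card, cIJ', cIK']; omega
      · intro s hs
        rw [glJoin_card, cJK'] at hs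
        rw [glJoin_nth I (glMeet J K) (by omega),
          glMeet_nth (glJoin I J) (glJoin I K) (by rw [cIJ', cIK']; omega),
          glMeet_nth J K (by omega), cIJ', cIK']
        have hIa : s < I.card := by omega
        by_cases hb : s < J.card
        · rw [glJoin_nth I J (by omega)]
          by_cases hcK : s < K.card
          · rw [glJoin_nth I K (by omega)]
            split_ifs <;> omega
          · split_ifs <;> omega
        · have hcK : s < K.card := by omega
          rw [glJoin_nth I K (by omega)]
          split_ifs <;> omega
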